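/- arXiv:2601.09880 — 3 statements merged into one kernel-verified Lean document; each statement's English description precedes it below -/
import Mathlib

section
/- Let A be a linear endomorphism of a finite-dimensional normed space and suppose G = {v : Aᵖv → 0} is a nonzero subspace. Then the operator norms of the restrictions Aᵖ|_G tend to 0 as p → ∞. -/
set_option synthInstance.maxHeartbeats 1000000


open Filter

/-- If `G = {v : Aᵖ v → 0}` is a nonzero subspace of a finite-dimensional normed
space, invariant under `A`, then the operator norms of the restrictions `Aᵖ|_G`
tend to `0`. -/
theorem stmt1 {F : Type*} [NormedAddCommGroup F] [NormedSpace ℝ F]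
    [FiniteDimensional ℝ F] (A : F →ₗ[ℝ] F) (G : Submodule ℝ F)
    (hG : ∀ v : F, v ∈ G ↔ Tendsto (fun p : ℕ => (A ^ p) v) atTop (nhds 0))
    (hGne : G ≠ ⊥) (hinv : ∀ x ∈ G, A x ∈ G) :
    Tendsto (fun p : ℕ =>
        ‖LinearMap.toContinuousLinearMap ((A.restrict hinv) ^ p)‖) atTop (nhds 0) := by
  -- Each vector of G tends to 0 under the powers of the restriction.
  have hpt : ∀ v : G, Tendsto (fun p : ℕ => ((A.restrict hinv ^ p) v : G)) atTop (nhds 0) := by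
    intro v
    have hcoe : ∀ p : ℕ, (((A.restrict hinv ^ p) v : G) : F) = (A ^ p) (v : F) := by
      intro p
      rw [Module.End.pow_restrict]
      rfl
    rw [Topology.IsEmbedding.tendsto_nhds_iff Topology.IsEmbedding.subtypeVal]
    simpa [Function.comp_def, hcoe] using (hG (v : F)).1 v.2
  -- Convergence in the space of continuous linear maps, via a basis.
  set B : ℕ → (G →L[ℝ] G) := fun p =>
    LinearMap.toContinuousLinearMap ((A.restrict hinv) ^ p) with hB
  have key : Tendsto B atTop (nhds 0) := by
    set b := Module.finBasis ℝ G with hb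
    set Φ : (G →L[ℝ] G) →L[ℝ] (Fin (Module.finrank ℝ G) → G) :=
      ContinuousLinearMap.pi (fun i => ContinuousLinearMap.apply ℝ G (b i)) with hΦ
    have hinj : Function.Injective Φ := by
      intro T S h
      ext1
      refine DFunLike.congr_fun (b.ext fun i => ?_) _
      exact congrFun h i
    have hemb : Topology.IsEmbedding Φ :=
      (LinearMap.isClosedEmbedding_of_injective (𝕜 := ℝ) (E := G →L[ℝ] G) (F := Fin (Module.finrank ℝ G) → G) (f := (Φ : (G →L[ℝ] G) →ₗ[ℝ] _))
        (LinearMap.ker_eq_bot.2 hinj)).toIsEmbedding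
    rw [hemb.tendsto_nhds_iff]
    have : Φ 0 = 0 := map_zero Φ
    rw [Function.comp_def]
    simp only [this]
    rw [tendsto_pi_nhds]
    intro i
    exact hpt (b i)
  have h := (continuous_norm.tendsto (0 : G →L[ℝ] G)).comp key
  rw [show ‖(0 : G →L[ℝ] G)‖ = 0 from ContinuousLinearMap.opNorm_zero] at h
  exact h
end

section
/- Let f be the tent map on ℝ (f(x)=2x for x∈[0,1/2], f(x)=2(1−x) for x∈(1/2,1], f(x)=0 elsewhere). If V : ℝ → ℝ is continuous and satisfies V(f(x)) ≤ V(x) for all x, then V is constant on [0,1]. -/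
/-- The tent map on `ℝ`. -/
noncomputable def tentMap (x : ℝ) : ℝ :=
  if x ∈ Set.Icc (0 : ℝ) (1 / 2) then 2 * x
  else if x ∈ Set.Ioc (1 / 2 : ℝ) 1 then 2 * (1 - x)
  else 0

lemma tentMap_half (w : ℝ) (hw : w ∈ Set.Icc (0 : ℝ) 1) : tentMap (w / 2) = w := by
  rw [tentMap, if_pos]
  · ring
  · constructor <;> [linarith [hw.1]; linarith [hw.2]]

lemma tentMap_one_sub_half (w : ℝ) (hw : w ∈ Set.Icc (0 : ℝ) 1) :
    tentMap (1 - w / 2) = w := by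
  rcases le_or_gt 1 w with h1 | h1
  · have : w = 1 := le_antisymm hw.2 h1
    subst this
    rw [tentMap, if_pos]
    · ring
    · constructor <;> norm_num
  · rw [tentMap, if_neg, if_pos]
    · ring
    · constructor <;> [linarith [hw.1]; linarith [hw.1]]
    · intro h
      have := h.2
      linarith

lemma preimage_close (x : ℝ) (hx : x ∈ Set.Icc (0 : ℝ) 1) :
    ∀ n : ℕ, ∀ y ∈ Set.Icc (0 : ℝ) 1,
      ∃ z ∈ Set.Icc (0 : ℝ) 1, tentMap^[n] z = x ∧ |z - y| ≤ (1 / 2) ^ n := by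
  intro n
  induction n with
  | zero =>
    intro y hy
    exact ⟨x, hx, rfl, by
      rw [pow_zero]
      rw [abs_le]; constructor <;> [linarith [hx.1, hy.2]; linarith [hx.2, hy.1]]⟩
  | succ n ih =>
    intro y hy
    rcases le_or_gt y (1 / 2) with hy2 | hy2
    · -- f y = 2y
      obtain ⟨w, hw, hfw, hclose⟩ := ih (2 * y) ⟨by linarith [hy.1], by linarith⟩
      refine ⟨w / 2, ⟨by linarith [hw.1], by linarith [hw.2]⟩, ?_, ?_⟩
      · rw [Function.iterate_succ_apply, tentMap_half w hw, hfw]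
      · have : |w / 2 - y| = |w - 2 * y| / 2 := by
          rw [show w / 2 - y = (w - 2 * y) / 2 by ring, abs_div]
          norm_num
        rw [this, pow_succ]
        linarith
    · obtain ⟨w, hw, hfw, hclose⟩ := ih (2 * (1 - y)) ⟨by linarith [hy.2], by linarith⟩
      refine ⟨1 - w / 2, ⟨by linarith [hw.2], by linarith [hw.1]⟩, ?_, ?_⟩
      · rw [Function.iterate_succ_apply, tentMap_one_sub_half w hw, hfw]
      · have : |1 - w / 2 - y| = |w - 2 * (1 - y)| / 2 := by
          rw [show (1 : ℝ) - w / 2 - y = -((w - 2 * (1 - y)) / 2) by ring, abs_neg, abs_div]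
          norm_num
        rw [this, pow_succ]
        linarith

/-- A continuous Lyapunov function for the tent map is constant on `[0,1]`. -/
theorem stmt7 (V : ℝ → ℝ) (hV : Continuous V)
    (hdec : ∀ x, V (tentMap x) ≤ V x) :
    ∀ x ∈ Set.Icc (0 : ℝ) 1, ∀ y ∈ Set.Icc (0 : ℝ) 1, V x = V y := by
  have iter : ∀ (n : ℕ) (z : ℝ), V (tentMap^[n] z) ≤ V z := by
    intro n
    induction n with
    | zero => intro z; simp
    | succ n ih =>
      intro z
      rw [Function.iterate_succ_apply]
      exact (ih (tentMap z)).trans (hdec z)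
  have key : ∀ x ∈ Set.Icc (0 : ℝ) 1, ∀ y ∈ Set.Icc (0 : ℝ) 1, V x ≤ V y := by
    intro x hx y hy
    apply le_of_forall_pos_le_add
    intro ε hε
    obtain ⟨δ, hδ, hcont⟩ := Metric.continuous_iff.mp hV y ε hε
    obtain ⟨n, hn⟩ := exists_pow_lt_of_lt_one hδ (by norm_num : (1 / 2 : ℝ) < 1)
    obtain ⟨z, hz, hfz, hclose⟩ := preimage_close x hx n y hy
    have h1 : V x ≤ V z := by rw [← hfz]; exact iter n z
    have h2 : dist z y < δ := lt_of_le_of_lt (by rwa [Real.dist_eq]) hn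
    have := hcont z h2
    rw [Real.dist_eq, abs_lt] at this
    linarith
  intro x hx y hy
  exact le_antisymm (key x hx y hy) (key y hy x hx)
end

section
/- Let f : ℝᵈ → ℝᵈ be differentiable at a fixed point x* with f(x*) = x*, and let V ∈ C² satisfy V∘f ≤ V and ∇V(x*) = 0. Then the matrix ∇²V(x*) − Df(x*)ᵀ ∇²V(x*) Df(x*) is positive semidefinite. -/
open scoped RealInnerProductSpace
open Asymptotics Filter InnerProductSpace

/-- Second order Taylor expansion of a `C²` function, in little-o form. -/
theorem quad_expansion {E : Type*} [NormedAddCommGroup E] [NormedSpace ℝ E]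
    (V : E → ℝ) (hV : ContDiff ℝ 2 V) (x : E) :
    (fun u => V (x + u) - V x - fderiv ℝ V x u
        - (1/2) * fderiv ℝ (fderiv ℝ V) x u u) =o[nhds 0] fun u => ‖u‖^2 := by
  set B := fderiv ℝ (fderiv ℝ V) x with hBdef
  have hd1 : Differentiable ℝ V := hV.differentiable (by norm_num)
  have hd2 : Differentiable ℝ (fderiv ℝ V) :=
    (hV.fderiv_right (m := 1) (le_refl 2)).differentiable (by norm_num)
  have hsymm : ∀ u w, B u w = B w u := fun u w =>
    (hV.contDiffAt.isSymmSndFDerivAt (by simp)) u w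
  have hB : HasFDerivAt (fderiv ℝ V) B x := (hd2 x).hasFDerivAt
  rw [hasFDerivAt_iff_isLittleO_nhds_zero] at hB
  set φ : E → ℝ := fun u => V (x + u) - fderiv ℝ V x u - (1/2) * B u u with hφdef
  have hφ : ∀ u : E, HasFDerivAt φ (fderiv ℝ V (x + u) - fderiv ℝ V x - B u) u := by
    intro u
    have h1 : HasFDerivAt (fun u : E => V (x + u)) (fderiv ℝ V (x + u)) u := by
      have := (hd1 (x + u)).hasFDerivAt.comp u ((hasFDerivAt_id u).const_add x)
      simpa [Function.comp_def] using this
    have h2 : HasFDerivAt (fun u : E => fderiv ℝ V x u) (fderiv ℝ V x) u :=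
      (fderiv ℝ V x).hasFDerivAt
    have hb : IsBoundedBilinearMap ℝ (fun p : E × E => B p.1 p.2) :=
      B.isBoundedBilinearMap
    have hΔ : HasFDerivAt (fun u : E => ((u, u) : E × E))
        ((ContinuousLinearMap.id ℝ E).prod (ContinuousLinearMap.id ℝ E)) u :=
      (hasFDerivAt_id u).prodMk (hasFDerivAt_id u)
    have h4' := HasFDerivAt.comp (f := fun y : E => ((y, y) : E × E)) u (hb.hasFDerivAt (u, u)) hΔ
    have h4 : HasFDerivAt (fun u : E => B u u)
        ((hb.deriv (u, u)).comp
          ((ContinuousLinearMap.id ℝ E).prod (ContinuousLinearMap.id ℝ E))) u := h4'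
    have h3 : HasFDerivAt (fun u : E => (1/2 : ℝ) * B u u)
        ((1/2 : ℝ) • ((hb.deriv (u, u)).comp
          ((ContinuousLinearMap.id ℝ E).prod (ContinuousLinearMap.id ℝ E)))) u :=
      h4.const_mul (1/2)
    have heq : ((1/2 : ℝ) • ((hb.deriv (u, u)).comp
        ((ContinuousLinearMap.id ℝ E).prod (ContinuousLinearMap.id ℝ E)))) = B u := by
      ext w
      simp only [ContinuousLinearMap.smul_apply, ContinuousLinearMap.coe_comp',
        Function.comp_apply, ContinuousLinearMap.prod_apply, ContinuousLinearMap.coe_id',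
        id_eq, hb.deriv_apply]
      rw [hsymm w u, smul_eq_mul]
      ring
    rw [heq] at h3
    exact (h1.sub h2).sub h3
  have key : ∀ u : E, V (x + u) - V x - fderiv ℝ V x u - (1/2) * B u u = φ u - φ 0 := by
    intro u
    simp only [hφdef, add_zero, map_zero, ContinuousLinearMap.map_zero, mul_zero]
    ring
  rw [isLittleO_iff]
  intro ε hε
  rw [isLittleO_iff] at hB
  obtain ⟨δ, hδpos, hδ⟩ := Metric.eventually_nhds_iff.1 (hB hε)
  rw [Metric.eventually_nhds_iff]
  refine ⟨δ, hδpos, fun u hu => ?_⟩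
  rw [key]
  have hu' : ‖u‖ < δ := by simpa [dist_eq_norm] using hu
  have hsub : Metric.closedBall (0 : E) ‖u‖ ⊆ Metric.ball 0 δ := by
    intro w hw
    simp only [Metric.mem_closedBall, Metric.mem_ball] at hw ⊢
    exact lt_of_le_of_lt hw hu'
  have bound : ∀ w ∈ Metric.closedBall (0 : E) ‖u‖,
      ‖fderiv ℝ V (x + w) - fderiv ℝ V x - B w‖ ≤ ε * ‖u‖ := by
    intro w hw
    simp only [Metric.mem_closedBall, dist_zero_right] at hw
    have : ‖fderiv ℝ V (x + w) - fderiv ℝ V x - B w‖ ≤ ε * ‖w‖ := by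
      have := hδ (y := w) (by simpa [dist_eq_norm] using lt_of_le_of_lt hw hu')
      simpa using this
    exact le_trans this (by nlinarith [norm_nonneg u])
  have hmv := Convex.norm_image_sub_le_of_norm_hasFDerivWithin_le
    (f := φ) (f' := fun w => fderiv ℝ V (x + w) - fderiv ℝ V x - B w)
    (fun w _ => (hφ w).hasFDerivWithinAt) bound (convex_closedBall 0 ‖u‖)
    (Metric.mem_closedBall_self (norm_nonneg u))
    (mem_closedBall_zero_iff.mpr le_rfl)
  calc ‖φ u - φ 0‖ ≤ ε * ‖u‖ * ‖u - 0‖ := hmv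
    _ = ε * ‖‖u‖^2‖ := by
        rw [sub_zero]
        rw [Real.norm_of_nonneg (by positivity)]
        ring

set_option maxHeartbeats 1600000 in
/-- Lyapunov dissipation at a fixed point: if `V ∘ f ≤ V`, `f(x*) = x*`,
`∇V(x*) = 0` and `V ∈ C²`, then `∇²V(x*) − Df(x*)ᵀ ∇²V(x*) Df(x*)` is positive
semidefinite. -/
theorem stmt9 {d : ℕ}
    (f : EuclideanSpace ℝ (Fin d) → EuclideanSpace ℝ (Fin d))
    (V : EuclideanSpace ℝ (Fin d) → ℝ)
    (xstar : EuclideanSpace ℝ (Fin d))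
    (A : EuclideanSpace ℝ (Fin d) →L[ℝ] EuclideanSpace ℝ (Fin d))
    (hf : HasFDerivAt f A xstar) (hfix : f xstar = xstar)
    (hV : ContDiff ℝ 2 V) (hgrad : gradient V xstar = 0)
    (hdec : ∀ x, V (f x) ≤ V x) :
    ∀ v, ⟪A v, fderiv ℝ (gradient V) xstar (A v)⟫ ≤
      ⟪v, fderiv ℝ (gradient V) xstar v⟫ := by
  classical
  intro v
  set B := fderiv ℝ (fderiv ℝ V) xstar with hBdef
  have hd1 : Differentiable ℝ V := hV.differentiable (by norm_num)
  have hd2 : Differentiable ℝ (fderiv ℝ V) :=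
    (hV.fderiv_right (m := 1) (le_refl 2)).differentiable (by norm_num)
  -- the gradient is T ∘ fderiv V for a continuous linear `T`
  set T : StrongDual ℝ (EuclideanSpace ℝ (Fin d)) →L[ℝ] EuclideanSpace ℝ (Fin d) :=
    ((InnerProductSpace.toDual ℝ (EuclideanSpace ℝ (Fin d))).symm.toContinuousLinearEquiv :
      StrongDual ℝ (EuclideanSpace ℝ (Fin d)) ≃L[ℝ]
        EuclideanSpace ℝ (Fin d)).toContinuousLinearMap with hTdef
  have hgradeq : gradient V = fun y => T (fderiv ℝ V y) := rfl
  have hH : fderiv ℝ (gradient V) xstar = T.comp B := by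
    rw [hgradeq]
    have := T.hasFDerivAt.comp xstar (hd2 xstar).hasFDerivAt
    exact this.fderiv
  have hinner : ∀ u w : EuclideanSpace ℝ (Fin d), ⟪u, fderiv ℝ (gradient V) xstar w⟫ = B w u := by
    intro u w
    rw [real_inner_comm, hH]
    exact InnerProductSpace.toDual_symm_apply
  rw [hinner, hinner]
  -- now the analytic part: `B (A v) (A v) ≤ B v v`
  have h0 : fderiv ℝ V xstar = 0 := by
    have := congrArg (InnerProductSpace.toDual ℝ (EuclideanSpace ℝ (Fin d))) hgrad
    simpa [gradient] using this
  have hQ := quad_expansion V hV xstar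
  rw [← hBdef] at hQ
  set ψ : EuclideanSpace ℝ (Fin d) → ℝ := fun u => V (xstar + u) - V xstar - (1/2) * B u u with hψdef
  have hQ' : ψ =o[nhds 0] fun u : EuclideanSpace ℝ (Fin d) => ‖u‖^2 := by
    refine hQ.congr' (Eventually.of_forall fun u => ?_) (Eventually.of_forall fun u => rfl)
    simp [hψdef, h0]
  set u : ℝ → EuclideanSpace ℝ (Fin d) := fun t => f (xstar + t • v) - xstar with hudef
  set w : ℝ → EuclideanSpace ℝ (Fin d) := fun t => t⁻¹ • u t with hwdef
  -- derivative along the line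
  have hγ : HasDerivAt (fun t : ℝ => xstar + t • v) v 0 := by
    simpa using ((hasDerivAt_id (0:ℝ)).smul_const v).const_add xstar
  have hcomp : HasDerivAt (fun t : ℝ => f (xstar + t • v)) (A v) 0 := by
    have hf' : HasFDerivAt f A ((fun t : ℝ => xstar + t • v) 0) := by simpa using hf
    exact hf'.comp_hasDerivAt 0 hγ
  have hw : Tendsto w (nhdsWithin 0 (Set.Ioi 0)) (nhds (A v)) := by
    rw [hasDerivAt_iff_tendsto_slope] at hcomp
    have := hcomp.mono_left
      (nhdsWithin_mono 0 (fun t (ht : t ∈ Set.Ioi (0:ℝ)) => ne_of_gt ht))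
    refine this.congr fun t => ?_
    simp [slope_def_module, hwdef, hudef, hfix]
  have hu0 : Tendsto u (nhdsWithin 0 (Set.Ioi 0)) (nhds 0) := by
    have hid : Tendsto (fun t : ℝ => t) (nhdsWithin 0 (Set.Ioi 0)) (nhds 0) :=
      tendsto_id.mono_left nhdsWithin_le_nhds
    have := hid.smul hw
    rw [zero_smul] at this
    refine this.congr' ?_
    filter_upwards [self_mem_nhdsWithin] with t (ht : t ∈ Set.Ioi (0:ℝ))
    simp [hwdef, smul_smul, mul_inv_cancel₀ (ne_of_gt (Set.mem_Ioi.mp ht))]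
  have husmul : ∀ᶠ t in nhdsWithin 0 (Set.Ioi 0), u t = t • w t := by
    filter_upwards [self_mem_nhdsWithin] with t (ht : t ∈ Set.Ioi (0:ℝ))
    simp [hwdef, smul_smul, mul_inv_cancel₀ (ne_of_gt (Set.mem_Ioi.mp ht))]
  -- ψ (u t) / t² → 0
  have hbig : (fun t => ‖u t‖^2) =O[nhdsWithin 0 (Set.Ioi 0)] fun t => t^2 := by
    rw [isBigO_iff]
    refine ⟨(‖A v‖ + 1)^2, ?_⟩
    have hwb : ∀ᶠ t in nhdsWithin 0 (Set.Ioi 0), ‖w t‖ ≤ ‖A v‖ + 1 := by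
      have := hw.norm.eventually_le_const (by linarith [norm_nonneg (A v)] :
        ‖A v‖ < ‖A v‖ + 1)
      exact this
    filter_upwards [hwb, husmul] with t hwt hut
    rw [hut]
    have h1 : ‖t • w t‖ = |t| * ‖w t‖ := by rw [norm_smul]; rfl
    rw [Real.norm_of_nonneg (by positivity), Real.norm_of_nonneg (by positivity : (0:ℝ) ≤ t^2)]
    rw [h1, mul_pow, sq_abs t]
    have h2 : ‖w t‖^2 ≤ (‖A v‖ + 1)^2 := by nlinarith [norm_nonneg (w t), norm_nonneg (A v)]
    have h3 := mul_le_mul_of_nonneg_left h2 (sq_nonneg t)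
    linarith
  have hψu : Tendsto (fun t => ψ (u t) / t^2) (nhdsWithin 0 (Set.Ioi 0)) (nhds 0) := by
    have h1 : (fun t => ψ (u t)) =o[nhdsWithin 0 (Set.Ioi 0)] fun t => ‖u t‖^2 :=
      hQ'.comp_tendsto hu0
    exact (h1.trans_isBigO hbig).tendsto_div_nhds_zero
  have hψv : Tendsto (fun t => ψ (t • v) / t^2) (nhdsWithin 0 (Set.Ioi 0)) (nhds 0) := by
    have hlin : Tendsto (fun t : ℝ => t • v) (nhdsWithin 0 (Set.Ioi 0)) (nhds 0) := by
      have : Tendsto (fun t : ℝ => t • v) (nhds 0) (nhds ((0:ℝ) • v)) :=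
        (continuous_id.smul continuous_const).tendsto 0
      rw [zero_smul] at this
      exact this.mono_left nhdsWithin_le_nhds
    have h1 : (fun t : ℝ => ψ (t • v)) =o[nhdsWithin 0 (Set.Ioi 0)] fun t : ℝ => ‖t • v‖^2 :=
      hQ'.comp_tendsto hlin
    have h2 : (fun t : ℝ => ‖t • v‖^2) =O[nhdsWithin 0 (Set.Ioi 0)] fun t : ℝ => t^2 := by
      rw [isBigO_iff]
      refine ⟨‖v‖^2, Eventually.of_forall fun t => ?_⟩
      have hsq : ‖t • v‖^2 = ‖v‖^2 * t^2 := by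
        rw [norm_smul, mul_pow, Real.norm_eq_abs, sq_abs]; ring
      rw [Real.norm_of_nonneg (by positivity),
        Real.norm_of_nonneg (by positivity : (0:ℝ) ≤ t^2), hsq]
    exact (h1.trans_isBigO h2).tendsto_div_nhds_zero
  -- B (w t) (w t) → B (A v) (A v)
  have hBw : Tendsto (fun t => B (w t) (w t)) (nhdsWithin 0 (Set.Ioi 0))
      (nhds (B (A v) (A v))) := by
    have hc : Continuous fun x : EuclideanSpace ℝ (Fin d) => B x x :=
      B.isBoundedBilinearMap.continuous.comp (continuous_id.prodMk continuous_id)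
    exact (hc.tendsto (A v)).comp hw
  -- the eventual inequality
  have hab : ∀ᶠ t in nhdsWithin 0 (Set.Ioi 0),
      (1/2) * B (w t) (w t) + ψ (u t) / t^2 ≤ (1/2) * B v v + ψ (t • v) / t^2 := by
    filter_upwards [self_mem_nhdsWithin, husmul] with t (ht : t ∈ Set.Ioi (0:ℝ)) hut
    have htpos : (0:ℝ) < t := ht
    have ht2 : (0:ℝ) < t^2 := by positivity
    have hVle : V (xstar + u t) ≤ V (xstar + t • v) := by
      have : xstar + u t = f (xstar + t • v) := by simp [hudef]
      rw [this]
      exact hdec _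
    have hexp1 : V (xstar + u t) = V xstar + (1/2) * B (u t) (u t) + ψ (u t) := by
      simp only [hψdef]; ring
    have hexp2 : V (xstar + t • v) = V xstar + (1/2) * (t^2 * B v v) + ψ (t • v) := by
      have : B (t • v) (t • v) = t^2 * B v v := by
        simp [map_smul, smul_smul]; ring
      simp only [hψdef, this]; ring
    have hBu : B (u t) (u t) = t^2 * B (w t) (w t) := by
      rw [hut]
      simp [map_smul, smul_smul]; ring
    have hmain : t^2 * ((1/2) * B (w t) (w t) + ψ (u t) / t^2) ≤
        t^2 * ((1/2) * B v v + ψ (t • v) / t^2) := by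
      have ht0 : t ≠ 0 := ne_of_gt htpos
      have e1 : t^2 * ((1/2) * B (w t) (w t) + ψ (u t) / t^2) =
          (1/2) * (t^2 * B (w t) (w t)) + ψ (u t) := by
        field_simp
      have e2 : t^2 * ((1/2) * B v v + ψ (t • v) / t^2) =
          (1/2) * (t^2 * B v v) + ψ (t • v) := by
        field_simp
      rw [e1, e2]
      linarith [hVle, hexp1, hexp2, hBu]
    exact le_of_mul_le_mul_left hmain ht2
  have hlim := le_of_tendsto_of_tendsto
    ((Tendsto.const_mul (1/2 : ℝ) hBw).add hψu)
    ((tendsto_const_nhds.add hψv)) hab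
  simp only [add_zero] at hlim
  linarith
end
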